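/- arXiv:2409.08120 — 3 statements merged into one kernel-verified Lean document; each statement's English description precedes it below -/
import Mathlib

section
/- Let {P_t} be a Markov semigroup on a compact metric space M with invariant probability measure μ satisfying: (a) ‖P_t g‖_∞ ≤ c1 e^{-c2 t} ‖g‖_∞ for all continuous g with ∫ g dμ = 0; (b) the Hölder-regularization bound |P_t g(x) - P_t g(y)| ≤ c3 ‖g‖_∞ t^{-κ} |x-y|^β for t ∈ (0,1], some κ > 1 and β ∈ (0,1). Then for every continuous f with ∫ f dμ = 0, the function ψ_f = ∫_0^∞ P_t f dt satisfies the Hölder estimate |ψ_f(x) - ψ_f(y)| ≤ C ‖f‖_∞ |x-y|^{β/κ} for all x, y ∈ M, with C depending only on c1, c2, c3, κ, β. -/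
noncomputable section
open MeasureTheory Metric Set Filter Topology

private def evCLM {M : Type*} [TopologicalSpace M] [CompactSpace M] (x : M) :
    C(M, ℝ) →L[ℝ] ℝ :=
  LinearMap.mkContinuous
    { toFun := fun g => g x, map_add' := fun _ _ => rfl, map_smul' := fun _ _ => rfl } 1
    (fun g => by simpa using g.norm_coe_le_norm x)

private lemma int_exp_Ioi (a : ℝ) {b : ℝ} (hb : 0 < b) :
    ∫ t in Set.Ioi a, Real.exp (-(b * t)) = Real.exp (-(b * a)) / b := by
  have h := MeasureTheory.integral_comp_mul_left_Ioi (fun u => Real.exp (-u)) a hb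
  simp only [smul_eq_mul] at h
  rw [h, integral_exp_neg_Ioi]
  field_simp

example (a b : ℝ) (hb : 0 < b) :
    IntegrableOn (fun t => Real.exp (-(b * t))) (Set.Ioi a) volume := by
  simpa [neg_mul] using exp_neg_integrableOn_Ioi a hb

theorem stmt_7 {M : Type*} [MetricSpace M] [CompactSpace M] [Nonempty M]
    [MeasurableSpace M] [BorelSpace M]
    (μ : Measure M) [IsProbabilityMeasure μ]
    (P : ℝ → C(M, ℝ) →L[ℝ] C(M, ℝ))
    -- Markov contraction semigroup, strongly continuous, with invariant measure μ
    (hid : ∀ f, P 0 f = f)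
    (hsemi : ∀ s t : ℝ, 0 ≤ s → 0 ≤ t → ∀ f, P (s + t) f = P s (P t f))
    (hcontr : ∀ t : ℝ, 0 ≤ t → ∀ f : C(M, ℝ), ‖P t f‖ ≤ ‖f‖)
    (hcont : ∀ f, Continuous fun t : ℝ => P t f)
    (hinv : ∀ t : ℝ, 0 ≤ t → ∀ f : C(M, ℝ), ∫ x, (P t f) x ∂μ = ∫ x, f x ∂μ)
    -- constants
    (c₁ c₂ c₃ κ β : ℝ) (hc₁ : 0 < c₁) (hc₂ : 0 < c₂) (hc₃ : 0 < c₃)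
    (hκ : 1 < κ) (hβ : β ∈ Set.Ioo (0 : ℝ) 1)
    -- (a) uniform exponential ergodicity
    (herg : ∀ t : ℝ, 0 ≤ t → ∀ g : C(M, ℝ), (∫ x, g x ∂μ) = 0 →
        ‖P t g‖ ≤ c₁ * Real.exp (-c₂ * t) * ‖g‖)
    -- (b) Hölder regularization
    (hreg : ∀ t ∈ Set.Ioc (0 : ℝ) 1, ∀ g : C(M, ℝ), ∀ x y : M,
        |(P t g) x - (P t g) y| ≤ c₃ * ‖g‖ * t ^ (-κ) * dist x y ^ β) :
    ∃ C : ℝ, 0 < C ∧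
      ∀ f : C(M, ℝ), (∫ x, f x ∂μ) = 0 →
        IntegrableOn (fun t : ℝ => P t f) (Set.Ioi (0 : ℝ)) volume ∧
        (let ψ : C(M, ℝ) := ∫ t in Set.Ioi (0 : ℝ), P t f
         ∀ x y : M, |ψ x - ψ y| ≤ C * ‖f‖ * dist x y ^ (β / κ)) := by
  obtain ⟨hβ0, hβ1⟩ := hβ
  have hκ0 : (0:ℝ) < κ := lt_trans one_pos hκ
  have hκ1 : (0:ℝ) < κ - 1 := by linarith
  have hβκ : 0 < β / κ := div_pos hβ0 hκ0
  set C : ℝ := 2 + c₃/(κ-1) + c₁*c₃/c₂ + 2*c₁/c₂ with hC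
  have hCpos : 0 < C := by positivity
  refine ⟨C, hCpos, ?_⟩
  intro f hf
  have hnorm : ∀ t : ℝ, 0 ≤ t → ‖P t f‖ ≤ c₁ * Real.exp (-c₂ * t) * ‖f‖ :=
    fun t ht => herg t ht f hf
  have hintexp : IntegrableOn (fun t => c₁ * Real.exp (-c₂ * t) * ‖f‖) (Set.Ioi (0:ℝ)) volume :=
    ((exp_neg_integrableOn_Ioi 0 hc₂).const_mul c₁).mul_const ‖f‖
  have hint : IntegrableOn (fun t : ℝ => P t f) (Set.Ioi (0:ℝ)) volume := by
    refine Integrable.mono' hintexp ((hcont f).aestronglyMeasurable.restrict) ?_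
    filter_upwards [ae_restrict_mem measurableSet_Ioi] with t ht
    exact hnorm t (le_of_lt ht)
  refine ⟨hint, ?_⟩
  intro ψ x y
  -- evaluation commutes with the integral
  have hev : ∀ z : M, ψ z = ∫ t in Set.Ioi (0:ℝ), (P t f) z := by
    intro z
    have h := (evCLM z).integral_comp_comm hint
    simpa [evCLM, LinearMap.mkContinuous] using h.symm
  have hgx : IntegrableOn (fun t => (P t f) x) (Set.Ioi (0:ℝ)) volume := by
    simpa [IntegrableOn, evCLM, LinearMap.mkContinuous] using (evCLM x).integrable_comp hint
  have hgy : IntegrableOn (fun t => (P t f) y) (Set.Ioi (0:ℝ)) volume := by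
    simpa [IntegrableOn, evCLM, LinearMap.mkContinuous] using (evCLM y).integrable_comp hint
  have hg : IntegrableOn (fun t => (P t f) x - (P t f) y) (Set.Ioi (0:ℝ)) volume := hgx.sub hgy
  have key : ψ x - ψ y = ∫ t in Set.Ioi (0:ℝ), ((P t f) x - (P t f) y) := by
    rw [hev x, hev y, ← integral_sub hgx hgy]
  set d : ℝ := dist x y with hd
  have hd0 : 0 ≤ d := dist_nonneg
  -- pointwise bounds
  have hb1 : ∀ t : ℝ, 0 ≤ t → |(P t f) x - (P t f) y| ≤ 2 * (c₁ * Real.exp (-c₂ * t) * ‖f‖) := by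
    intro t ht
    have h1 : |(P t f) x| ≤ ‖P t f‖ := by
      simpa [Real.norm_eq_abs] using (P t f).norm_coe_le_norm x
    have h2 : |(P t f) y| ≤ ‖P t f‖ := by
      simpa [Real.norm_eq_abs] using (P t f).norm_coe_le_norm y
    have h3 := hnorm t ht
    calc |(P t f) x - (P t f) y| ≤ |(P t f) x| + |(P t f) y| := abs_sub _ _
      _ ≤ 2 * (c₁ * Real.exp (-c₂ * t) * ‖f‖) := by linarith
  have hb2 : ∀ t ∈ Set.Ioc (0:ℝ) 1, |(P t f) x - (P t f) y| ≤ c₃ * ‖f‖ * t ^ (-κ) * d ^ β :=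
    fun t ht => hreg t ht f x y
  have hb3 : ∀ t : ℝ, 1 ≤ t →
      |(P t f) x - (P t f) y| ≤ c₁ * c₃ * ‖f‖ * Real.exp (-c₂ * (t-1)) * d ^ β := by
    intro t ht
    have heq : P t f = P 1 (P (t-1) f) := by
      have h := hsemi 1 (t-1) one_pos.le (by linarith) f
      rwa [show (1:ℝ) + (t-1) = t by ring] at h
    have h2 := hreg 1 ⟨one_pos, le_refl 1⟩ (P (t-1) f) x y
    rw [Real.one_rpow, mul_one] at h2
    have h3 : ‖P (t-1) f‖ ≤ c₁ * Real.exp (-c₂ * (t-1)) * ‖f‖ := herg (t-1) (by linarith) f hf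
    have hdb : 0 ≤ d ^ β := Real.rpow_nonneg hd0 β
    calc |(P t f) x - (P t f) y| = |(P 1 (P (t-1) f)) x - (P 1 (P (t-1) f)) y| := by rw [heq]
      _ ≤ c₃ * ‖P (t-1) f‖ * d ^ β := h2
      _ ≤ c₃ * (c₁ * Real.exp (-c₂ * (t-1)) * ‖f‖) * d ^ β := by
          gcongr
      _ = c₁ * c₃ * ‖f‖ * Real.exp (-c₂ * (t-1)) * d ^ β := by ring
  -- basic crude bound
  have hb0 : ∀ t : ℝ, 0 ≤ t → |(P t f) x - (P t f) y| ≤ 2 * ‖f‖ := by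
    intro t ht
    have h1 : |(P t f) x| ≤ ‖P t f‖ := by
      simpa [Real.norm_eq_abs] using (P t f).norm_coe_le_norm x
    have h2 : |(P t f) y| ≤ ‖P t f‖ := by
      simpa [Real.norm_eq_abs] using (P t f).norm_coe_le_norm y
    have h3 := hcontr t ht f
    calc |(P t f) x - (P t f) y| ≤ |(P t f) x| + |(P t f) y| := abs_sub _ _
      _ ≤ 2 * ‖f‖ := by linarith
  have hfnn : (0:ℝ) ≤ ‖f‖ := norm_nonneg f
  rw [key]
  rcases eq_or_lt_of_le hd0 with hdz | hdpos
  · -- x = y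
    have hxy : x = y := dist_eq_zero.mp hdz.symm
    subst hxy
    have h1 : (0:ℝ) ≤ d ^ (β/κ) := Real.rpow_nonneg hd0 _
    rw [show (∫ t in Set.Ioi (0:ℝ), (((P t) f) x - ((P t) f) x)) = 0 by simp, abs_zero]
    exact mul_nonneg (mul_nonneg hCpos.le hfnn) h1
  rcases lt_or_ge d 1 with hdlt | hdge
  · -- case 0 < d < 1
    set δ : ℝ := d ^ (β/κ) with hδdef
    have hδ0 : 0 < δ := Real.rpow_pos_of_pos hdpos _
    have hδ1 : δ < 1 := Real.rpow_lt_one hd0 hdlt hβκ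
    have hdb : 0 ≤ d ^ β := Real.rpow_nonneg hd0 β
    -- integrability on pieces
    have hgA : IntegrableOn (fun t => (P t f) x - (P t f) y) (Set.Ioc 0 δ) volume :=
      hg.mono_set Set.Ioc_subset_Ioi_self
    have hgD : IntegrableOn (fun t => (P t f) x - (P t f) y) (Set.Ioi δ) volume :=
      hg.mono_set (Set.Ioi_subset_Ioi hδ0.le)
    have hgB : IntegrableOn (fun t => (P t f) x - (P t f) y) (Set.Ioc δ 1) volume :=
      hgD.mono_set Set.Ioc_subset_Ioi_self
    have hgC : IntegrableOn (fun t => (P t f) x - (P t f) y) (Set.Ioi 1) volume :=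
      hg.mono_set (Set.Ioi_subset_Ioi one_pos.le)
    -- splitting the integral
    have hsplit : (∫ t in Set.Ioi (0:ℝ), ((P t f) x - (P t f) y))
        = (∫ t in Set.Ioc 0 δ, ((P t f) x - (P t f) y))
          + ((∫ t in Set.Ioc δ 1, ((P t f) x - (P t f) y))
            + (∫ t in Set.Ioi 1, ((P t f) x - (P t f) y))) := by
      rw [← Set.Ioc_union_Ioi_eq_Ioi hδ0.le,
        setIntegral_union (Set.Ioc_disjoint_Ioi le_rfl) measurableSet_Ioi hgA hgD,
        ← Set.Ioc_union_Ioi_eq_Ioi hδ1.le,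
        setIntegral_union (Set.Ioc_disjoint_Ioi le_rfl) measurableSet_Ioi hgB hgC]
    -- bound A
    have hA : |∫ t in Set.Ioc 0 δ, ((P t f) x - (P t f) y)| ≤ 2 * ‖f‖ * δ := by
      have h := norm_setIntegral_le_of_norm_le_const (C := 2 * ‖f‖)
        (s := Set.Ioc (0:ℝ) δ) (μ := volume) (f := fun t => (P t f) x - (P t f) y)
        (by simp [Real.volume_Ioc])
        (fun t ht => by simpa [Real.norm_eq_abs] using hb0 t ht.1.le)
      rw [measureReal_def, Real.volume_Ioc, ENNReal.toReal_ofReal (by linarith)] at h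
      simpa [Real.norm_eq_abs] using h
    -- bound B
    have hrint : IntegrableOn (fun t : ℝ => t ^ (-κ)) (Set.Ioc δ 1) volume :=
      (intervalIntegral.intervalIntegrable_rpow
        (Or.inr (Set.notMem_uIcc_of_lt hδ0 one_pos))).1
    have hBint : IntegrableOn (fun t : ℝ => c₃ * ‖f‖ * t ^ (-κ) * d ^ β)
        (Set.Ioc δ 1) volume := (hrint.const_mul (c₃ * ‖f‖)).mul_const (d ^ β)
    have hB : |∫ t in Set.Ioc δ 1, ((P t f) x - (P t f) y)|
        ≤ c₃ * ‖f‖ * d ^ β * (δ ^ (1-κ) / (κ-1)) := by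
      have h1 : ‖∫ t in Set.Ioc δ 1, ((P t f) x - (P t f) y)‖
          ≤ ∫ t in Set.Ioc δ 1, c₃ * ‖f‖ * t ^ (-κ) * d ^ β := by
        refine norm_integral_le_of_norm_le hBint ?_
        filter_upwards [ae_restrict_mem measurableSet_Ioc] with t ht
        simpa [Real.norm_eq_abs] using hb2 t ⟨hδ0.trans ht.1, ht.2⟩
      have h2 : (∫ t in Set.Ioc δ 1, c₃ * ‖f‖ * t ^ (-κ) * d ^ β)
          = (c₃ * ‖f‖ * d ^ β) * ∫ t in Set.Ioc δ 1, t ^ (-κ) := by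
        rw [← MeasureTheory.integral_const_mul]
        congr 1; funext t; ring
      have h3 : (∫ t in Set.Ioc δ 1, (t:ℝ) ^ (-κ)) ≤ δ ^ (1-κ) / (κ-1) := by
        rw [← intervalIntegral.integral_of_le hδ1.le,
          integral_rpow (Or.inr ⟨by intro hcon; linarith,
            Set.notMem_uIcc_of_lt hδ0 one_pos⟩), Real.one_rpow,
          show -κ + 1 = 1 - κ by ring]
        have h4 : (1 - δ ^ (1-κ)) / (1-κ) = (δ ^ (1-κ) - 1)/(κ-1) := by
          rw [div_eq_div_iff (by linarith) (by linarith)]; ring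
        rw [h4]
        have h5 : δ ^ (1-κ) - 1 ≤ δ ^ (1-κ) := by linarith
        gcongr
      calc |∫ t in Set.Ioc δ 1, ((P t f) x - (P t f) y)|
          ≤ ∫ t in Set.Ioc δ 1, c₃ * ‖f‖ * t ^ (-κ) * d ^ β := h1
        _ = (c₃ * ‖f‖ * d ^ β) * ∫ t in Set.Ioc δ 1, t ^ (-κ) := h2
        _ ≤ (c₃ * ‖f‖ * d ^ β) * (δ ^ (1-κ) / (κ-1)) := by
            refine mul_le_mul_of_nonneg_left h3 ?_
            positivity
    -- bound C (the tail)
    have hExp : ∀ t:ℝ, Real.exp (-c₂*(t-1)) = Real.exp c₂ * Real.exp (-c₂*t) := by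
      intro t; rw [← Real.exp_add]; ring_nf
    set K : ℝ := c₁*c₃*‖f‖*Real.exp c₂*(d^β) with hKdef
    have hCb : ∀ t:ℝ, 1 ≤ t → |(P t f) x - (P t f) y| ≤ K * Real.exp (-c₂*t) := by
      intro t ht
      calc |(P t f) x - (P t f) y| ≤ c₁*c₃*‖f‖*Real.exp (-c₂*(t-1))*(d^β) := hb3 t ht
        _ = K * Real.exp (-c₂*t) := by rw [hExp t, hKdef]; ring
    have hCint : IntegrableOn (fun t:ℝ => K * Real.exp (-c₂*t)) (Set.Ioi 1) volume :=
      (exp_neg_integrableOn_Ioi 1 hc₂).const_mul K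
    have hT : |∫ t in Set.Ioi 1, ((P t f) x - (P t f) y)| ≤ c₁*c₃*‖f‖*(d^β)/c₂ := by
      have h1 : ‖∫ t in Set.Ioi 1, ((P t f) x - (P t f) y)‖
          ≤ ∫ t in Set.Ioi 1, K * Real.exp (-c₂*t) := by
        refine norm_integral_le_of_norm_le hCint ?_
        filter_upwards [ae_restrict_mem measurableSet_Ioi] with t ht
        simpa [Real.norm_eq_abs] using hCb t ht.le
      have h2 : (∫ t in Set.Ioi 1, K * Real.exp (-c₂*t)) = K * (Real.exp (-c₂)/c₂) := by
        simp only [neg_mul]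
        rw [MeasureTheory.integral_const_mul, int_exp_Ioi 1 hc₂, mul_one]
      have h3 : K * (Real.exp (-c₂)/c₂) = c₁*c₃*‖f‖*(d^β)/c₂ := by
        rw [hKdef, Real.exp_neg]
        field_simp
      rw [Real.norm_eq_abs] at h1
      calc |∫ t in Set.Ioi 1, ((P t f) x - (P t f) y)|
          ≤ ∫ t in Set.Ioi 1, K * Real.exp (-c₂*t) := h1
        _ = c₁*c₃*‖f‖*(d^β)/c₂ := by rw [h2, h3]
    -- assembling
    have hkey : d ^ β * δ ^ (1-κ) = d ^ (β/κ) := by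
      rw [hδdef, ← Real.rpow_mul hd0, ← Real.rpow_add hdpos]
      congr 1
      field_simp
      ring
    have hdβ : d ^ β ≤ d ^ (β/κ) :=
      Real.rpow_le_rpow_of_exponent_ge hdpos hdlt.le (div_le_self hβ0.le hκ.le)
    set D : ℝ := d ^ (β/κ) with hDdef
    have hD0 : 0 ≤ D := Real.rpow_nonneg hd0 _
    have e2 : c₃ * ‖f‖ * d ^ β * (δ ^ (1-κ)/(κ-1)) = c₃/(κ-1)*‖f‖*D := by
      rw [show c₃ * ‖f‖ * d ^ β * (δ ^ (1-κ)/(κ-1))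
        = c₃/(κ-1)*‖f‖*(d ^ β * δ ^ (1-κ)) by field_simp, hkey]
    have e3 : c₁*c₃*‖f‖*(d^β)/c₂ ≤ c₁*c₃/c₂*‖f‖*D := by
      rw [show c₁*c₃*‖f‖*(d^β)/c₂ = c₁*c₃/c₂*‖f‖*(d^β) by ring]
      refine mul_le_mul_of_nonneg_left hdβ ?_
      positivity
    have hCexp : C*‖f‖*D = 2*‖f‖*D + c₃/(κ-1)*‖f‖*D + c₁*c₃/c₂*‖f‖*D + 2*c₁/c₂*‖f‖*D := by
      rw [hC]; ring
    have hlast : 0 ≤ 2*c₁/c₂*‖f‖*D := by positivity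
    calc |∫ t in Set.Ioi (0:ℝ), ((P t f) x - (P t f) y)|
        = |(∫ t in Set.Ioc 0 δ, ((P t f) x - (P t f) y))
            + ((∫ t in Set.Ioc δ 1, ((P t f) x - (P t f) y))
              + (∫ t in Set.Ioi 1, ((P t f) x - (P t f) y)))| := by rw [hsplit]
      _ ≤ |∫ t in Set.Ioc 0 δ, ((P t f) x - (P t f) y)|
          + (|∫ t in Set.Ioc δ 1, ((P t f) x - (P t f) y)|
            + |∫ t in Set.Ioi 1, ((P t f) x - (P t f) y)|) :=
          (abs_add_le _ _).trans (by gcongr; exact abs_add_le _ _)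
      _ ≤ 2*‖f‖*δ + (c₃ * ‖f‖ * d ^ β * (δ ^ (1-κ)/(κ-1)) + c₁*c₃*‖f‖*(d^β)/c₂) := by
          gcongr
      _ ≤ 2*‖f‖*D + (c₃/(κ-1)*‖f‖*D + c₁*c₃/c₂*‖f‖*D) := by
          rw [e2]
          gcongr
      _ ≤ C*‖f‖*D := by rw [hCexp]; linarith
  · -- case 1 ≤ d
    have h1d : (1:ℝ) ≤ d ^ (β/κ) := Real.one_le_rpow hdge hβκ.le
    have h2 : |∫ t in Set.Ioi (0:ℝ), ((P t f) x - (P t f) y)|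
        ≤ ∫ t in Set.Ioi (0:ℝ), 2*(c₁ * Real.exp (-c₂*t) * ‖f‖) := by
      rw [← Real.norm_eq_abs]
      refine norm_integral_le_of_norm_le (hintexp.const_mul 2) ?_
      filter_upwards [ae_restrict_mem measurableSet_Ioi] with t ht
      simpa [Real.norm_eq_abs] using hb1 t ht.le
    have h3 : (∫ t in Set.Ioi (0:ℝ), 2*(c₁ * Real.exp (-c₂*t) * ‖f‖)) = 2*c₁*‖f‖/c₂ := by
      rw [show (fun t : ℝ => 2*(c₁ * Real.exp (-c₂*t) * ‖f‖))
        = fun t : ℝ => (2*c₁*‖f‖) * Real.exp (-(c₂*t)) by funext t; rw [neg_mul]; ring]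
      rw [MeasureTheory.integral_const_mul, int_exp_Ioi 0 hc₂]
      rw [mul_zero, neg_zero, Real.exp_zero]
      ring
    have hC4 : 2*c₁/c₂ ≤ C := by
      rw [hC]
      have h5 : 0 ≤ c₃/(κ-1) := by positivity
      have h6 : 0 ≤ c₁*c₃/c₂ := by positivity
      linarith
    calc |∫ t in Set.Ioi (0:ℝ), ((P t f) x - (P t f) y)|
        ≤ 2*c₁*‖f‖/c₂ := by rw [← h3]; exact h2
      _ = (2*c₁/c₂)*‖f‖ := by ring
      _ ≤ C*‖f‖ := mul_le_mul_of_nonneg_right hC4 hfnn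
      _ = C*‖f‖*1 := (mul_one _).symm
      _ ≤ C*‖f‖*(d ^ (β/κ)) :=
          mul_le_mul_of_nonneg_left h1d (mul_nonneg hCpos.le hfnn)
end
end

section
/- Let α ∈ (0,2) and let D ⊂ R^d be a bounded open set. Then there exists a constant C > 0, depending only on d, α and the diameter of D, such that for every f in the fractional Sobolev space W^{α/2,2}(R^d) that vanishes almost everywhere on R^d \ D, ∫_D f(x)^2 dx ≤ C ∬_{R^d × R^d} (f(x) - f(y))^2 |x-y|^{-(d+α)} dx dy. -/
noncomputable section
open MeasureTheory Metric Set Filter Topology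

theorem stmt_9 {d : ℕ} (hd : 0 < d) {α : ℝ} (hα : α ∈ Set.Ioo (0 : ℝ) 2)
    {D : Set (EuclideanSpace ℝ (Fin d))} (hopen : IsOpen D)
    (hbdd : Bornology.IsBounded D) :
    ∃ C : ℝ, 0 < C ∧
      ∀ f : EuclideanSpace ℝ (Fin d) → ℝ,
        -- f belongs to the fractional Sobolev space W^{α/2,2}(ℝ^d)
        MemLp f 2 volume →
        Integrable (fun p : EuclideanSpace ℝ (Fin d) × EuclideanSpace ℝ (Fin d) =>
          (f p.1 - f p.2) ^ 2 * ‖p.1 - p.2‖ ^ (-((d : ℝ) + α))) →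
        -- f vanishes a.e. outside D
        (∀ᵐ x : EuclideanSpace ℝ (Fin d), x ∉ D → f x = 0) →
        (∫ x in D, f x ^ 2)
          ≤ C * ∫ p : EuclideanSpace ℝ (Fin d) × EuclideanSpace ℝ (Fin d),
              (f p.1 - f p.2) ^ 2 * ‖p.1 - p.2‖ ^ (-((d : ℝ) + α)) := by
  obtain ⟨R, hR1, hDR⟩ := hbdd.subset_ball_lt 1 0
  have hR : (0 : ℝ) < R := lt_trans one_pos hR1
  -- a point at distance 3R from the origin
  set z : EuclideanSpace ℝ (Fin d) :=
    EuclideanSpace.single (⟨0, hd⟩ : Fin d) (3 * R) with hzdef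
  have hz : ‖z‖ = 3 * R := by
    rw [hzdef, EuclideanSpace.norm_single, Real.norm_eq_abs, abs_of_pos (by linarith)]
  set A : Set (EuclideanSpace ℝ (Fin d)) := closedBall z R with hAdef
  have hAmeas : MeasurableSet A := measurableSet_closedBall
  have hDmeas : MeasurableSet D := hopen.measurableSet
  have hAfin : volume A < ⊤ := measure_closedBall_lt_top
  have hApos : 0 < volume A := measure_closedBall_pos volume z hR
  set volA : ℝ := (volume A).toReal with hvolA
  have hvolApos : 0 < volA := ENNReal.toReal_pos hApos.ne' hAfin.ne
  set c : ℝ := (5 * R) ^ (-((d : ℝ) + α)) with hc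
  have hcpos : 0 < c := Real.rpow_pos_of_pos (by linarith) _
  set k : ℝ := c * volA with hk
  have hkpos : 0 < k := mul_pos hcpos hvolApos
  refine ⟨1 / k, by positivity, fun f hmem hint hvan => ?_⟩
  set g : EuclideanSpace ℝ (Fin d) × EuclideanSpace ℝ (Fin d) → ℝ :=
    fun p => (f p.1 - f p.2) ^ 2 * ‖p.1 - p.2‖ ^ (-((d : ℝ) + α)) with hg
  have hgnonneg : ∀ p, 0 ≤ g p := fun p =>
    mul_nonneg (sq_nonneg _) (Real.rpow_nonneg (norm_nonneg _) _)
  -- the lower bound function on the product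
  set L : EuclideanSpace ℝ (Fin d) × EuclideanSpace ℝ (Fin d) → ℝ :=
    fun p => f p.1 ^ 2 * c with hL
  haveI : IsFiniteMeasure (volume.restrict A) :=
    ⟨by simpa [Measure.restrict_apply_univ] using hAfin⟩
  -- A is disjoint from D
  have hAD : ∀ y ∈ A, y ∉ D := by
    intro y hy hyD
    have h1 : ‖y‖ < R := by simpa using hDR hyD
    have h2 : ‖z - y‖ ≤ R := by simpa [dist_eq_norm] using mem_closedBall'.1 hy
    have : ‖z‖ ≤ ‖z - y‖ + ‖y‖ := by
      simpa using norm_add_le (z - y) y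
    rw [hz] at this; linarith
  -- a.e. vanishing of f p.2 on the product
  have hvan2 : ∀ᵐ p : EuclideanSpace ℝ (Fin d) × EuclideanSpace ℝ (Fin d)
      ∂(volume : Measure _), p.2 ∉ D → f p.2 = 0 := by
    rw [ae_iff] at hvan ⊢
    have hset : {p : EuclideanSpace ℝ (Fin d) × EuclideanSpace ℝ (Fin d) |
          ¬(p.2 ∉ D → f p.2 = 0)}
        = (univ : Set (EuclideanSpace ℝ (Fin d))) ×ˢ {y | ¬(y ∉ D → f y = 0)} := by
      ext p; simp [Set.mem_prod]
    rw [Measure.volume_eq_prod, hset, Measure.prod_prod, hvan, mul_zero]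
  have hmemset : ∀ᵐ p : EuclideanSpace ℝ (Fin d) × EuclideanSpace ℝ (Fin d)
      ∂(volume.restrict (D ×ˢ A)), p ∈ D ×ˢ A :=
    ae_restrict_mem (hDmeas.prod hAmeas)
  have hvan2' : ∀ᵐ p : EuclideanSpace ℝ (Fin d) × EuclideanSpace ℝ (Fin d)
      ∂(volume.restrict (D ×ˢ A)), p.2 ∉ D → f p.2 = 0 :=
    ae_restrict_of_ae hvan2
  -- pointwise comparison on D ×ˢ A
  have hptwise : ∀ᵐ p : EuclideanSpace ℝ (Fin d) × EuclideanSpace ℝ (Fin d)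
      ∂(volume.restrict (D ×ˢ A)), L p ≤ g p := by
    filter_upwards [hmemset, hvan2'] with p hp hpv
    obtain ⟨hp1, hp2⟩ := hp
    have hfz : f p.2 = 0 := hpv (hAD _ hp2)
    have hn1 : ‖p.1‖ < R := by simpa using hDR hp1
    have hn2 : ‖z - p.2‖ ≤ R := by simpa [dist_eq_norm] using mem_closedBall'.1 hp2
    have hn2' : ‖p.2‖ ≤ 4 * R := by
      have : ‖p.2‖ ≤ ‖z‖ + ‖p.2 - z‖ := by simpa using norm_add_le z (p.2 - z)
      rw [hz] at this
      rw [← norm_neg] at hn2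
      simp only [neg_sub] at hn2
      linarith
    have hlow : ‖p.2‖ ≥ 2 * R := by
      have : ‖z‖ ≤ ‖z - p.2‖ + ‖p.2‖ := by simpa using norm_add_le (z - p.2) p.2
      rw [hz] at this; linarith
    have hpos : 0 < ‖p.1 - p.2‖ := by
      have : ‖p.2‖ ≤ ‖p.2 - p.1‖ + ‖p.1‖ := by simpa using norm_add_le (p.2 - p.1) p.1
      have h' : ‖p.2 - p.1‖ = ‖p.1 - p.2‖ := by rw [← norm_neg]; simp
      rw [h'] at this; linarith
    have hupper : ‖p.1 - p.2‖ ≤ 5 * R := by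
      have := norm_sub_le p.1 p.2; linarith
    have hrpow : c ≤ ‖p.1 - p.2‖ ^ (-((d : ℝ) + α)) := by
      apply Real.rpow_le_rpow_of_nonpos hpos hupper
      have hα0 : 0 < α := hα.1
      have hd0 : (0:ℝ) ≤ d := Nat.cast_nonneg d
      linarith
    calc L p = f p.1 ^ 2 * c := rfl
      _ ≤ f p.1 ^ 2 * ‖p.1 - p.2‖ ^ (-((d : ℝ) + α)) :=
          mul_le_mul_of_nonneg_left hrpow (sq_nonneg _)
      _ = g p := by simp [hg, hfz]
  -- integrability
  have hfsq : Integrable (fun x => f x ^ 2) (volume.restrict D) :=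
    hmem.integrable_sq.restrict
  have hLint : Integrable L (volume.restrict (D ×ˢ A)) := by
    have h1 : Integrable
        (fun p : EuclideanSpace ℝ (Fin d) × EuclideanSpace ℝ (Fin d) =>
          f p.1 ^ 2 * (fun _ : EuclideanSpace ℝ (Fin d) => c) p.2)
        ((volume.restrict D).prod (volume.restrict A)) :=
      Integrable.mul_prod hfsq (integrable_const c)
    rw [Measure.prod_restrict, ← Measure.volume_eq_prod] at h1
    exact h1
  have hgint : Integrable g (volume.restrict (D ×ˢ A)) := hint.restrict
  -- the key chain of inequalities
  have hstep1 : ∫ p, L p ∂(volume.restrict (D ×ˢ A))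
      = (∫ x in D, f x ^ 2) * (c * volA) := by
    rw [Measure.volume_eq_prod, ← Measure.prod_restrict]
    rw [show (fun p : EuclideanSpace ℝ (Fin d) × EuclideanSpace ℝ (Fin d) => L p)
        = fun p => f p.1 ^ 2 * (fun _ : EuclideanSpace ℝ (Fin d) => c) p.2 from rfl]
    rw [integral_prod_mul (fun x => f x ^ 2) (fun _ => c)]
    rw [integral_const]
    simp only [Measure.real, Measure.restrict_apply_univ, smul_eq_mul, hvolA]
    ring
  have hstep2 : ∫ p, L p ∂(volume.restrict (D ×ˢ A))
      ≤ ∫ p, g p ∂(volume.restrict (D ×ˢ A)) :=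
    integral_mono_ae hLint hgint hptwise
  have hstep3 : ∫ p, g p ∂(volume.restrict (D ×ˢ A)) ≤ ∫ p, g p :=
    setIntegral_le_integral hint (Filter.Eventually.of_forall hgnonneg)
  have hmain : (∫ x in D, f x ^ 2) * k ≤ ∫ p, g p := by
    rw [hk, ← hstep1]; exact le_trans hstep2 hstep3
  rw [one_div, inv_mul_eq_div, le_div_iff₀ hkpos]
  exact hmain
end
end

section
/- Let α ∈ (0,1], and let K be as above (symmetric, 1-periodic in both variables, Λ^{-1} ≤ K ≤ Λ, C^1 in the second variable with bounded derivative). For ε ∈ (0,1) define F_ε(x) := p.v. ∫_{|z| ≤ 1/ε} z K(x,x+z) |z|^{-(d+α)} dz. Then F_ε is continuous and 1-periodic with ∫_{[0,1]^d} F_ε(x) dx = 0, and there exists c > 0 independent of ε such that ‖F_ε‖_∞ ≤ c (1 + ε^{α-1} 1_{α ∈ (0,1)} + |log ε| 1_{α = 1}). -/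
noncomputable section
open MeasureTheory Metric Set Filter Topology

/-- The lattice vector of `ℤ^d` inside `ℝ^d` corresponding to `m : Fin d → ℤ`. -/
def intVec {d : ℕ} (m : Fin d → ℤ) : EuclideanSpace ℝ (Fin d) :=
  (EuclideanSpace.equiv (Fin d) ℝ).symm fun i => (m i : ℝ)

/-- The unit cube `[0,1]^d`. -/
def unitCube (d : ℕ) : Set (EuclideanSpace ℝ (Fin d)) :=
  {x | ∀ i, x i ∈ Set.Icc (0 : ℝ) 1}



lemma auxSummable {R s : ℝ} (hR : 0 < R) {d : ℕ} (hs : -(d:ℝ) < s) :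
    Summable (fun n : ℕ => (R/2^(n+1)) ^ s * (R/2^n) ^ (d:ℕ)) := by
  have h2 : (0:ℝ) ≤ 2 := by norm_num
  have key : ∀ n : ℕ, (R/2^(n+1)) ^ s * (R/2^n) ^ (d:ℕ)
      = (R ^ s * (2:ℝ) ^ (-s) * R ^ (d:ℕ)) * ((2:ℝ) ^ (-(s+(d:ℝ)))) ^ n := by
    intro n
    have hb1 : (0:ℝ) < 2 ^ (n+1) := by positivity
    have hbn : (0:ℝ) < 2 ^ n := by positivity
    rw [Real.div_rpow hR.le hb1.le, div_pow]
    rw [show ((2:ℝ) ^ (n+1) : ℝ) = (2:ℝ) ^ (((n+1):ℕ):ℝ) from (Real.rpow_natCast 2 (n+1)).symm]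
    rw [← Real.rpow_natCast ((2:ℝ) ^ (-(s+(d:ℝ)))) n, ← Real.rpow_mul h2,
      ← Real.rpow_natCast ((2:ℝ)^n : ℝ) d, ← Real.rpow_natCast (2:ℝ) n, ← Real.rpow_mul h2,
      ← Real.rpow_mul h2]
    rw [div_eq_mul_inv, ← Real.rpow_neg h2, div_eq_mul_inv, ← Real.rpow_neg h2]
    have hmerge : ∀ p q : ℝ, R^s * (2:ℝ)^p * (R^(d:ℕ) * (2:ℝ)^q) = R^s*R^(d:ℕ)*(2:ℝ)^(p+q) :=
      fun p q => by rw [Real.rpow_add (by norm_num : (0:ℝ) < 2)]; ring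
    have hmerge2 : ∀ c : ℝ, R^s * (2:ℝ)^(-s) * R^(d:ℕ) * (2:ℝ)^c = R^s*R^(d:ℕ)*(2:ℝ)^(-s+c) :=
      fun c => by rw [Real.rpow_add (by norm_num : (0:ℝ) < 2)]; ring
    rw [hmerge, hmerge2]
    congr 1
    push_cast
    ring
  simp only [key]
  apply Summable.mul_left
  apply summable_geometric_of_lt_one (Real.rpow_nonneg h2 _)
  rw [Real.rpow_lt_one_iff_of_pos (by norm_num)]
  left
  constructor
  · norm_num
  · linarith

lemma auxIntegrableOn {d : ℕ} (hd : 0 < d) {s : ℝ} (hs : -(d:ℝ) < s) {R : ℝ} (hR : 0 < R) :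
    IntegrableOn (fun z : EuclideanSpace ℝ (Fin d) => ‖z‖ ^ s) (closedBall 0 R) := by
  haveI : Nonempty (Fin d) := ⟨⟨0, hd⟩⟩
  have hfinrank : Module.finrank ℝ (EuclideanSpace ℝ (Fin d)) = d := finrank_euclideanSpace_fin
  have hmeas : Measurable (fun z : EuclideanSpace ℝ (Fin d) => ‖z‖ ^ s) := by fun_prop
  rcases le_or_gt 0 s with hs0 | hs0
  · refine Measure.integrableOn_of_bounded (M := R ^ s) measure_closedBall_lt_top.ne
      hmeas.aestronglyMeasurable ?_
    filter_upwards [ae_restrict_mem measurableSet_closedBall] with z hz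
    rw [Real.norm_eq_abs, abs_of_nonneg (Real.rpow_nonneg (norm_nonneg z) s)]
    exact Real.rpow_le_rpow (norm_nonneg z) (mem_closedBall_zero_iff.1 hz) hs0
  · set u : ℕ → Set (EuclideanSpace ℝ (Fin d)) :=
      fun n => closedBall 0 (R/2^n) \ closedBall 0 (R/2^(n+1)) with hu
    have hcover : closedBall (0 : EuclideanSpace ℝ (Fin d)) R ⊆ {0} ∪ ⋃ n, u n := by
      intro z hz
      rcases eq_or_ne z 0 with rfl | hz0
      · exact Or.inl rfl
      · right
        have hzpos : 0 < ‖z‖ := norm_pos_iff.2 hz0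
        have hex : ∃ n : ℕ, R / 2 ^ (n+1) < ‖z‖ := by
          obtain ⟨n, hn⟩ := pow_unbounded_of_one_lt (R / ‖z‖) (by norm_num : (1:ℝ) < 2)
          refine ⟨n, ?_⟩
          rw [div_lt_iff₀ hzpos] at hn
          rw [div_lt_iff₀ (by positivity)]
          have hple : (2:ℝ)^n ≤ 2^(n+1) := by
            apply pow_le_pow_right₀ (by norm_num) (by omega)
          nlinarith
        refine mem_iUnion.2 ⟨Nat.find hex, ?_, ?_⟩
        · simp only [mem_closedBall_zero_iff]
          rcases Nat.eq_zero_or_pos (Nat.find hex) with h0 | hpos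
          · rw [h0]; simpa using mem_closedBall_zero_iff.1 hz
          · have hmin := Nat.find_min hex (m := Nat.find hex - 1) (by omega)
            push_neg at hmin
            have heq : Nat.find hex - 1 + 1 = Nat.find hex := by omega
            rw [heq] at hmin
            exact hmin
        · simp only [mem_closedBall_zero_iff, not_le]
          exact Nat.find_spec hex
    have hmu0 : (volume : Measure (EuclideanSpace ℝ (Fin d))) {(0 : EuclideanSpace ℝ (Fin d))} = 0 := by
      haveI : Nontrivial (EuclideanSpace ℝ (Fin d)) := by
        refine ⟨EuclideanSpace.single ⟨0, hd⟩ 1, 0, ?_⟩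
        intro hcon
        have := congrArg (fun v : EuclideanSpace ℝ (Fin d) => v ⟨0, hd⟩) hcon
        simp at this
      exact measure_singleton 0
    refine IntegrableOn.mono_set ?_ hcover
    apply IntegrableOn.union
    · rw [IntegrableOn, Measure.restrict_eq_zero.2 hmu0]
      exact integrable_zero_measure
    · refine ⟨hmeas.aestronglyMeasurable, ?_⟩
      rw [hasFiniteIntegral_iff_norm]
      have hbound : ∀ n : ℕ, (∫⁻ z in u n, ENNReal.ofReal ‖‖z‖ ^ s‖) ≤
          ENNReal.ofReal ((R/2^(n+1)) ^ s * (R/2^n) ^ (d:ℕ)) *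
            volume (ball (0 : EuclideanSpace ℝ (Fin d)) 1) := by
        intro n
        have hstep : ∀ z ∈ u n, ENNReal.ofReal ‖‖z‖ ^ s‖ ≤ ENNReal.ofReal ((R/2^(n+1)) ^ s) := by
          intro z hz
          apply ENNReal.ofReal_le_ofReal
          rw [Real.norm_eq_abs, abs_of_nonneg (Real.rpow_nonneg (norm_nonneg z) s)]
          have h1 : R / 2 ^ (n+1) < ‖z‖ := by
            have := hz.2; rw [mem_closedBall_zero_iff] at this; push_neg at this; exact this
          exact Real.rpow_le_rpow_of_nonpos (by positivity) h1.le hs0.le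
        calc (∫⁻ z in u n, ENNReal.ofReal ‖‖z‖ ^ s‖)
            ≤ ∫⁻ _ in u n, ENNReal.ofReal ((R/2^(n+1)) ^ s) := setLIntegral_mono measurable_const hstep
          _ = ENNReal.ofReal ((R/2^(n+1)) ^ s) * volume (u n) := setLIntegral_const _ _
          _ ≤ ENNReal.ofReal ((R/2^(n+1)) ^ s) * volume (closedBall (0 : EuclideanSpace ℝ (Fin d)) (R/2^n)) := by
              exact mul_le_mul_right (measure_mono diff_subset) _
          _ = ENNReal.ofReal ((R/2^(n+1)) ^ s) * (ENNReal.ofReal ((R/2^n) ^ (d:ℕ)) *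
                volume (ball (0 : EuclideanSpace ℝ (Fin d)) 1)) := by
              rw [Measure.addHaar_closedBall _ _ (by positivity), hfinrank]
          _ = ENNReal.ofReal ((R/2^(n+1)) ^ s * (R/2^n) ^ (d:ℕ)) *
                volume (ball (0 : EuclideanSpace ℝ (Fin d)) 1) := by
              rw [← mul_assoc, ← ENNReal.ofReal_mul (Real.rpow_nonneg (by positivity) s)]
      calc (∫⁻ z in ⋃ n, u n, ENNReal.ofReal ‖‖z‖ ^ s‖)
          ≤ ∑' n, ∫⁻ z in u n, ENNReal.ofReal ‖‖z‖ ^ s‖ := lintegral_iUnion_le _ _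
        _ ≤ ∑' n, ENNReal.ofReal ((R/2^(n+1)) ^ s * (R/2^n) ^ (d:ℕ)) *
              volume (ball (0 : EuclideanSpace ℝ (Fin d)) 1) := ENNReal.tsum_le_tsum hbound
        _ = (∑' n, ENNReal.ofReal ((R/2^(n+1)) ^ s * (R/2^n) ^ (d:ℕ))) *
              volume (ball (0 : EuclideanSpace ℝ (Fin d)) 1) := ENNReal.tsum_mul_right
        _ < ⊤ := by
            apply ENNReal.mul_lt_top _ measure_ball_lt_top
            rw [← ENNReal.ofReal_tsum_of_nonneg (fun n => by positivity) (auxSummable hR hs)]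
            exact ENNReal.ofReal_lt_top


lemma auxAnnulus {d : ℕ} (hd : 0 < d) {a b : ℝ} (t : ℝ) (ha : 0 ≤ a) (hab : a ≤ b) :
    ∫ z in {z : EuclideanSpace ℝ (Fin d) | a < ‖z‖ ∧ ‖z‖ ≤ b}, ‖z‖ ^ t
      = (d : ℝ) * (volume (ball (0 : EuclideanSpace ℝ (Fin d)) 1)).toReal *
          ∫ y in a..b, y ^ (d - 1 : ℕ) * y ^ t := by
  haveI : Nonempty (Fin d) := ⟨⟨0, hd⟩⟩
  haveI : Nontrivial (EuclideanSpace ℝ (Fin d)) := by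
    refine ⟨EuclideanSpace.single ⟨0, hd⟩ 1, 0, fun hcon => ?_⟩
    have := congrArg (fun v : EuclideanSpace ℝ (Fin d) => v ⟨0, hd⟩) hcon; simp at this
  have hfinrank : Module.finrank ℝ (EuclideanSpace ℝ (Fin d)) = d := finrank_euclideanSpace_fin
  have key := MeasureTheory.integral_fun_norm_addHaar (volume : Measure (EuclideanSpace ℝ (Fin d)))
    (Set.indicator (Ioc a b) (fun y => y ^ t))
  rw [hfinrank] at key
  have hLHS : (∫ x : EuclideanSpace ℝ (Fin d), Set.indicator (Ioc a b) (fun y => y ^ t) ‖x‖)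
      = ∫ z in {z : EuclideanSpace ℝ (Fin d) | a < ‖z‖ ∧ ‖z‖ ≤ b}, ‖z‖ ^ t := by
    have hset : {z : EuclideanSpace ℝ (Fin d) | a < ‖z‖ ∧ ‖z‖ ≤ b}
        = (fun z : EuclideanSpace ℝ (Fin d) => ‖z‖) ⁻¹' (Ioc a b) := rfl
    rw [hset, ← integral_indicator (measurable_norm (measurableSet_Ioc))]
    congr 1
  have hRHS : (∫ y in Ioi (0:ℝ), y ^ (d - 1 : ℕ) • Set.indicator (Ioc a b) (fun y => y ^ t) y)
      = ∫ y in a..b, y ^ (d - 1 : ℕ) * y ^ t := by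
    have hptw : ∀ y : ℝ, y ^ (d - 1 : ℕ) • Set.indicator (Ioc a b) (fun y => y ^ t) y
        = Set.indicator (Ioc a b) (fun y => y ^ (d - 1 : ℕ) * y ^ t) y := by
      intro y
      by_cases hy : y ∈ Ioc a b
      · rw [Set.indicator_of_mem hy, Set.indicator_of_mem hy, smul_eq_mul]
      · rw [Set.indicator_of_notMem hy, Set.indicator_of_notMem hy, smul_zero]
    simp only [hptw]
    rw [setIntegral_indicator measurableSet_Ioc]
    have : Ioi (0:ℝ) ∩ Ioc a b = Ioc a b := by
      apply Set.inter_eq_right.mpr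
      intro y hy
      exact lt_of_le_of_lt ha hy.1
    rw [this, intervalIntegral.integral_of_le hab]
  rw [hLHS, hRHS] at key
  rw [key, nsmul_eq_mul, smul_eq_mul]
  rw [measureReal_def]; ring


lemma auxTranslate {d : ℕ} (hd : 0 < d) (f : EuclideanSpace ℝ (Fin d) → ℝ)
    (hper : ∀ x m, f (x + intVec m) = f x) (a : EuclideanSpace ℝ (Fin d)) :
    ∫ x in unitCube d, f (x + a) = ∫ x in unitCube d, f x := by
  haveI : Nonempty (Fin d) := ⟨⟨0, hd⟩⟩
  set b := (EuclideanSpace.basisFun (Fin d) ℝ).toBasis with hb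
  set D := ZSpan.fundamentalDomain b with hD
  -- elements of the lattice are intVec's
  have hlat : ∀ g : Submodule.span ℤ (Set.range ⇑b), ∃ m : Fin d → ℤ, (g : EuclideanSpace ℝ (Fin d)) = intVec m := by
    rintro ⟨g, hg⟩
    rw [Submodule.mem_span_range_iff_exists_fun ℤ] at hg
    obtain ⟨m, hm⟩ := hg
    refine ⟨m, ?_⟩
    simp only []
    rw [← hm]
    ext j
    have hsum : ((Finset.univ.sum fun i => m i • b i) : EuclideanSpace ℝ (Fin d)) j
        = Finset.univ.sum fun i => ((m i • b i : EuclideanSpace ℝ (Fin d)) j) :=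
      by rw [WithLp.ofLp_sum]; exact Finset.sum_apply j Finset.univ _
    rw [hsum]
    simp only [intVec, hb]
    simp [OrthonormalBasis.coe_toBasis, EuclideanSpace.basisFun_apply,
      EuclideanSpace.single_apply]
  -- invariance of periodic functions under lattice
  have hinv : ∀ (g : EuclideanSpace ℝ (Fin d) → ℝ), (∀ x m, g (x + intVec m) = g x) →
      ∀ (v : Submodule.span ℤ (Set.range ⇑b)) (x : EuclideanSpace ℝ (Fin d)), g (v +ᵥ x) = g x := by
    intro g hg v x
    obtain ⟨m, hm⟩ := hlat v
    have : (v : EuclideanSpace ℝ (Fin d)) +ᵥ x = x + intVec m := by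
      rw [vadd_eq_add, hm, add_comm]
    rw [show (v +ᵥ x : EuclideanSpace ℝ (Fin d)) = (v : EuclideanSpace ℝ (Fin d)) +ᵥ x from rfl, this, hg]
  -- fundamental domains
  have hFD : IsAddFundamentalDomain (Submodule.span ℤ (Set.range ⇑b)) D volume :=
    ZSpan.isAddFundamentalDomain b volume
  have hτ : MeasurePreserving (fun x : EuclideanSpace ℝ (Fin d) => x + a) volume volume :=
    measurePreserving_add_right volume a
  have hFD' : IsAddFundamentalDomain (Submodule.span ℤ (Set.range ⇑b))
      ((fun x : EuclideanSpace ℝ (Fin d) => x + a) ⁻¹' D) volume := by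
    refine hFD.preimage_of_equiv (f := fun x => x + a) hτ.quasiMeasurePreserving
      (e := id) Function.bijective_id ?_
    intro g x
    show (g +ᵥ x) + a = (id g) +ᵥ (x + a)
    change ((g : EuclideanSpace ℝ (Fin d)) + x) + a = (g : EuclideanSpace ℝ (Fin d)) + (x + a)
    rw [add_assoc]
  -- cube is a.e. the fundamental domain
  have hae : (unitCube d : Set (EuclideanSpace ℝ (Fin d))) =ᵐ[volume] D := by
    have hDsub : D ⊆ unitCube d := by
      intro x hx i
      have := ((ZSpan.mem_fundamentalDomain b).1 hx) i
      rw [hb] at this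
      simp only [OrthonormalBasis.coe_toBasis_repr_apply, EuclideanSpace.basisFun_repr] at this
      exact ⟨this.1, this.2.le⟩
    have hnull : volume ((unitCube d : Set (EuclideanSpace ℝ (Fin d))) \ D) = 0 := by
      have hsub : (unitCube d : Set (EuclideanSpace ℝ (Fin d))) \ D ⊆
          ⋃ i : Fin d, {x : EuclideanSpace ℝ (Fin d) | x i = 1} := by
        rintro x ⟨hx1, hx2⟩
        have : ¬ ∀ i, b.repr x i ∈ Ico (0:ℝ) 1 := fun hcon => hx2 ((ZSpan.mem_fundamentalDomain b).2 hcon)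
        push_neg at this
        obtain ⟨i, hi⟩ := this
        rw [hb] at hi
        simp only [OrthonormalBasis.coe_toBasis_repr_apply, EuclideanSpace.basisFun_repr,
          mem_Ico, not_and, not_lt] at hi
        have h01 := hx1 i
        refine mem_iUnion.2 ⟨i, ?_⟩
        have : (1:ℝ) ≤ x i := hi h01.1
        exact le_antisymm h01.2 this
      refine measure_mono_null hsub (measure_iUnion_null fun i => ?_)
      have hplane : {x : EuclideanSpace ℝ (Fin d) | x i = 1}
          = ((MeasurableEquiv.toLp 2 (Fin d → ℝ)).symm) ⁻¹' {y : Fin d → ℝ | y i = 1} := rfl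
      have hms : MeasurableSet {y : Fin d → ℝ | y i = 1} :=
        measurable_pi_apply i (measurableSet_singleton 1)
      have hmp := (EuclideanSpace.volume_preserving_symm_measurableEquiv_toLp (Fin d)).measure_preimage
        hms.nullMeasurableSet
      rw [hplane, hmp, volume_pi]
      exact Measure.pi_hyperplane _ i 1
    exact MeasureTheory.ae_eq_set.2 ⟨hnull, by rw [diff_eq_empty.2 hDsub]; exact measure_empty⟩
  have hper' : ∀ x m, f ((x + a) + intVec m) = f (x + a) := fun x m => hper _ m
  have hinv2 : ∀ (v : Submodule.span ℤ (Set.range ⇑b)) (x : EuclideanSpace ℝ (Fin d)),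
      f ((v +ᵥ x) + a) = f (x + a) := by
    intro v x
    have := hinv (fun y => f (y + a)) (fun y m => by
      show f ((y + intVec m) + a) = f (y + a)
      rw [add_right_comm]
      exact hper' y m) v x
    simpa using this
  have hmv : MeasurableVAdd (Submodule.span ℤ (Set.range ⇑b)) (EuclideanSpace ℝ (Fin d)) :=
    (inferInstance : MeasurableVAdd (Submodule.span ℤ (Set.range ⇑b)).toAddSubgroup
      (EuclideanSpace ℝ (Fin d)))
  have hvi : VAddInvariantMeasure (Submodule.span ℤ (Set.range ⇑b)) (EuclideanSpace ℝ (Fin d)) volume :=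
    (inferInstance : VAddInvariantMeasure (Submodule.span ℤ (Set.range ⇑b)).toAddSubgroup
      (EuclideanSpace ℝ (Fin d)) volume)
  calc ∫ x in unitCube d, f (x + a)
      = ∫ x in D, f (x + a) := setIntegral_congr_set hae
    _ = ∫ x in (fun x : EuclideanSpace ℝ (Fin d) => x + a) ⁻¹' D, f (x + a) :=
        hFD.setIntegral_eq hFD' hinv2
    _ = ∫ x in D, f x := hτ.setIntegral_preimage_emb (MeasurableEquiv.addRight a).measurableEmbedding f D
    _ = ∫ x in unitCube d, f x := (setIntegral_congr_set hae).symm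



set_option maxHeartbeats 1000000 in
theorem stmt_11 {d : ℕ} (hd : 0 < d) {α : ℝ} (hα : α ∈ Set.Ioc (0 : ℝ) 1)
    {Λ : ℝ} (hΛ : 1 ≤ Λ)
    (K : EuclideanSpace ℝ (Fin d) → EuclideanSpace ℝ (Fin d) → ℝ)
    (hKcont : Continuous (Function.uncurry K))
    (hKsym : ∀ x y, K x y = K y x)
    (hKper : ∀ x y (m : Fin d → ℤ),
        K (x + intVec m) y = K x y ∧ K x (y + intVec m) = K x y)
    (hKbdd : ∀ x y, Λ⁻¹ ≤ K x y ∧ K x y ≤ Λ)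
    (hKC1 : ∀ x, ContDiff ℝ 1 (K x))
    (Mder : ℝ) (hKder : ∀ x y, ‖fderiv ℝ (K x) y‖ ≤ Mder) :
    ∃ c : ℝ, 0 < c ∧
      ∀ ε ∈ Set.Ioo (0 : ℝ) 1,
        ∃ F : EuclideanSpace ℝ (Fin d) → EuclideanSpace ℝ (Fin d),
          -- `F = F_ε` is the principal value of `∫_{|z| ≤ 1/ε} z K(x,x+z) |z|^{-d-α} dz`
          (∀ x, Filter.Tendsto
            (fun r : ℝ => ∫ z in {z : EuclideanSpace ℝ (Fin d) | r < ‖z‖ ∧ ‖z‖ ≤ 1 / ε},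
              (K x (x + z) * ‖z‖ ^ (-((d : ℝ) + α))) • z)
            (nhdsWithin 0 (Set.Ioi 0)) (nhds (F x))) ∧
          -- `F_ε` is continuous and `1`-periodic with mean zero,
          Continuous F ∧
          (∀ x (m : Fin d → ℤ), F (x + intVec m) = F x) ∧
          (∫ x in unitCube d, F x) = 0 ∧
          -- and it satisfies the quantitative sup bound
          (∀ x, ‖F x‖ ≤ c * (1 + (if α < 1 then ε ^ (α - 1) else 0)
            + (if α = 1 then |Real.log ε| else 0))) := by
  obtain ⟨hα0, hα1⟩ := hα
  have hd1 : (1:ℝ) ≤ (d:ℝ) := by exact_mod_cast hd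
  have hΛ0 : (0:ℝ) < Λ := lt_of_lt_of_le one_pos hΛ
  have hM0 : 0 ≤ Mder := le_trans (norm_nonneg _) (hKder 0 0)
  set β : ℝ := (d:ℝ) + α with hβ
  have hβ1 : 1 ≤ β := by rw [hβ]; linarith
  have hβ2 : -(d:ℝ) < 2 - β := by rw [hβ]; linarith
  have hKabs : ∀ x y, |K x y| ≤ Λ := by
    intro x y
    have h1 := (hKbdd x y).1
    have h2 := (hKbdd x y).2
    have h3 : (0:ℝ) < Λ⁻¹ := inv_pos.2 hΛ0
    exact abs_le.2 ⟨by linarith, h2⟩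
  set Cd : ℝ := (d:ℝ) * (volume (ball (0 : EuclideanSpace ℝ (Fin d)) 1)).toReal with hCd
  have hCd0 : 0 ≤ Cd := mul_nonneg (by positivity) ENNReal.toReal_nonneg
  set A : ℝ := Mder * ∫ z in closedBall (0:EuclideanSpace ℝ (Fin d)) 1, ‖z‖ ^ (2 - β) with hA
  have hαinv : 0 ≤ (1-α)⁻¹ := inv_nonneg.2 (by linarith)
  set c : ℝ := 1 + |A| + Λ * Cd * (1 + (1-α)⁻¹) with hc
  have hLC : 0 ≤ Λ * Cd := mul_nonneg hΛ0.le hCd0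
  have hc0 : 0 < c := by
    have h1 : 0 ≤ Λ * Cd * (1 + (1-α)⁻¹) := mul_nonneg hLC (by linarith)
    have := abs_nonneg A
    rw [hc]; linarith
  refine ⟨c, hc0, ?_⟩
  rintro ε ⟨hε0, hε1⟩
  set R : ℝ := 1/ε with hR
  have hR1 : 1 < R := one_lt_one_div hε0 hε1
  have hR0 : 0 < R := lt_trans one_pos hR1
  -- the symmetrized kernel
  set Hk : EuclideanSpace ℝ (Fin d) → EuclideanSpace ℝ (Fin d) → EuclideanSpace ℝ (Fin d) :=
    fun x z => ((K x (x + z) - K x (x - z)) * (2⁻¹ * ‖z‖ ^ (-β))) • z with hHk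
  -- continuity and measurability facts
  have hcontx : ∀ z, Continuous fun x => K x (x+z) - K x (x-z) := fun z =>
    (hKcont.comp (continuous_id.prodMk (continuous_id.add continuous_const))).sub
      (hKcont.comp (continuous_id.prodMk (continuous_id.sub continuous_const)))
  have hcontz : ∀ x, Continuous fun z => K x (x+z) - K x (x-z) := fun x =>
    (hKcont.comp (continuous_const.prodMk (continuous_const.add continuous_id))).sub
      (hKcont.comp (continuous_const.prodMk (continuous_const.sub continuous_id)))
  have hmeasz : ∀ x, Measurable (Hk x) := by
    intro x
    exact ((hcontz x).measurable.mul
      (by fun_prop : Measurable fun z : EuclideanSpace ℝ (Fin d) => 2⁻¹ * ‖z‖ ^ (-β))).smul measurable_id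
  -- pointwise bounds
  have hb1 : ∀ x z, ‖Hk x z‖ ≤ Mder * ‖z‖ ^ (2 - β) := by
    intro x z
    rcases eq_or_ne z 0 with rfl | hz
    · have h0 : Hk x 0 = 0 := by simp [hHk]
      rw [h0, norm_zero]
      exact mul_nonneg hM0 (Real.rpow_nonneg (le_refl (0:ℝ)) _)
    · have hz0 : 0 < ‖z‖ := norm_pos_iff.2 hz
      have hdiff : |K x (x+z) - K x (x-z)| ≤ Mder * (‖z‖ + ‖z‖) := by
        have hmv := Convex.norm_image_sub_le_of_norm_fderiv_le (𝕜 := ℝ) (f := K x)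
          (fun y _ => ((hKC1 x).differentiable one_ne_zero).differentiableAt)
          (fun y _ => hKder x y) convex_univ (mem_univ (x - z)) (mem_univ (x + z))
        have hnorm : ‖(x+z) - (x-z)‖ ≤ ‖z‖ + ‖z‖ := by
          have he : (x+z) - (x-z) = z + z := by abel
          rw [he]; exact norm_add_le z z
        calc |K x (x+z) - K x (x-z)| = ‖K x (x+z) - K x (x-z)‖ := (Real.norm_eq_abs _).symm
          _ ≤ Mder * ‖(x+z)-(x-z)‖ := hmv
          _ ≤ Mder * (‖z‖+‖z‖) := mul_le_mul_of_nonneg_left hnorm hM0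
      have hrw : ‖z‖ ^ (2 - β) = ‖z‖ * (‖z‖ ^ (-β) * ‖z‖) := by
        rw [show (2 - β) = 1 + (-β) + 1 from by ring, Real.rpow_add hz0, Real.rpow_add hz0,
          Real.rpow_one]
        ring
      rw [hHk]
      simp only []
      rw [norm_smul, Real.norm_eq_abs, abs_mul,
        abs_of_nonneg (by positivity : (0:ℝ) ≤ 2⁻¹ * ‖z‖ ^ (-β))]
      calc |K x (x+z) - K x (x-z)| * (2⁻¹ * ‖z‖^(-β)) * ‖z‖
          ≤ (Mder * (‖z‖ + ‖z‖)) * (2⁻¹ * ‖z‖^(-β)) * ‖z‖ :=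
            mul_le_mul_of_nonneg_right
              (mul_le_mul_of_nonneg_right hdiff (by positivity)) (norm_nonneg z)
        _ = Mder * (‖z‖ * (‖z‖^(-β) * ‖z‖)) := by ring
        _ = Mder * ‖z‖ ^ (2-β) := by rw [← hrw]
  have hb2 : ∀ x z, ‖Hk x z‖ ≤ Λ * ‖z‖ ^ (1 - β) := by
    intro x z
    rcases eq_or_ne z 0 with rfl | hz
    · have h0 : Hk x 0 = 0 := by simp [hHk]
      rw [h0, norm_zero]
      exact mul_nonneg hΛ0.le (Real.rpow_nonneg (le_refl (0:ℝ)) _)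
    · have hz0 : 0 < ‖z‖ := norm_pos_iff.2 hz
      have hdiff : |K x (x+z) - K x (x-z)| ≤ Λ + Λ := by
        have h1 := hKabs x (x+z)
        have h2 := hKabs x (x-z)
        rw [abs_le] at h1 h2 ⊢
        constructor <;> [linarith [h1.1, h2.2]; linarith [h1.2, h2.1]]
      have hrw : ‖z‖ ^ (1 - β) = ‖z‖ ^ (-β) * ‖z‖ := by
        rw [show (1 - β) = -β + 1 from by ring, Real.rpow_add hz0, Real.rpow_one]
      rw [hHk]
      simp only []
      rw [norm_smul, Real.norm_eq_abs, abs_mul,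
        abs_of_nonneg (by positivity : (0:ℝ) ≤ 2⁻¹ * ‖z‖ ^ (-β))]
      calc |K x (x+z) - K x (x-z)| * (2⁻¹ * ‖z‖^(-β)) * ‖z‖
          ≤ (Λ + Λ) * (2⁻¹ * ‖z‖^(-β)) * ‖z‖ :=
            mul_le_mul_of_nonneg_right
              (mul_le_mul_of_nonneg_right hdiff (by positivity)) (norm_nonneg z)
        _ = Λ * (‖z‖^(-β) * ‖z‖) := by ring
        _ = Λ * ‖z‖ ^ (1-β) := by rw [← hrw]
  have hIntOn : ∀ (x : EuclideanSpace ℝ (Fin d)) (r : ℝ), 0 < r →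
      IntegrableOn (Hk x) (closedBall 0 r) := by
    intro x r hr
    exact ((auxIntegrableOn hd hβ2 hr).const_mul Mder).mono'
      (hmeasz x).aestronglyMeasurable (ae_of_all _ fun z => hb1 x z)
  have hSdef : ∀ r : ℝ, {z : EuclideanSpace ℝ (Fin d) | r < ‖z‖ ∧ ‖z‖ ≤ R}
      = closedBall (0:EuclideanSpace ℝ (Fin d)) R \ closedBall 0 r := by
    intro r; ext z
    simp only [mem_setOf_eq, mem_diff, mem_closedBall_zero_iff, not_le]
    tauto
  have hSmeas : ∀ r : ℝ, MeasurableSet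
      (closedBall (0:EuclideanSpace ℝ (Fin d)) R \ closedBall 0 r) := fun r =>
    measurableSet_closedBall.diff measurableSet_closedBall
  have hvol0 : volume ({0} : Set (EuclideanSpace ℝ (Fin d))) = 0 := by
    haveI : Nonempty (Fin d) := ⟨⟨0, hd⟩⟩
    haveI : Nontrivial (EuclideanSpace ℝ (Fin d)) := by
      refine ⟨EuclideanSpace.single ⟨0, hd⟩ 1, 0, fun hcon => ?_⟩
      have := congrArg (fun v : EuclideanSpace ℝ (Fin d) => v ⟨0, hd⟩) hcon; simp at this
    exact measure_singleton 0
  refine ⟨fun x => ∫ z in closedBall (0:EuclideanSpace ℝ (Fin d)) R, Hk x z, ?_, ?_, ?_, ?_, ?_⟩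
  · -- principal value
    intro x
    have hsym : ∀ r : ℝ, 0 < r →
        ∫ z in closedBall (0:EuclideanSpace ℝ (Fin d)) R \ closedBall 0 r,
            (K x (x + z) * ‖z‖ ^ (-β)) • z
          = ∫ z in closedBall (0:EuclideanSpace ℝ (Fin d)) R \ closedBall 0 r, Hk x z := by
      intro r hr
      set S := closedBall (0:EuclideanSpace ℝ (Fin d)) R \ closedBall 0 r with hS
      have hSfin : volume S ≠ ⊤ :=
        ((measure_mono (diff_subset)).trans_lt measure_closedBall_lt_top).ne
      have hgen : ∀ (φ : EuclideanSpace ℝ (Fin d) → ℝ), Measurable φ → (∀ z, |φ z| ≤ Λ) →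
          IntegrableOn (fun z => (φ z * ‖z‖^(-β)) • z) S := by
        intro φ hφm hφb
        refine Measure.integrableOn_of_bounded (M := Λ * r^(-β) * R) hSfin
          ((hφm.mul (by fun_prop :
            Measurable fun z : EuclideanSpace ℝ (Fin d) => ‖z‖ ^ (-β))).smul
            measurable_id).aestronglyMeasurable ?_
        filter_upwards [ae_restrict_mem (hSmeas r)] with z hz
        have hz1 : r < ‖z‖ := by
          have := hz.2; rw [mem_closedBall_zero_iff] at this; exact not_le.1 this
        have hz2 : ‖z‖ ≤ R := mem_closedBall_zero_iff.1 hz.1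
        rw [norm_smul, Real.norm_eq_abs, abs_mul,
          abs_of_nonneg (Real.rpow_nonneg (norm_nonneg z) _)]
        have h1 : ‖z‖ ^ (-β) ≤ r ^ (-β) :=
          Real.rpow_le_rpow_of_nonpos hr hz1.le (neg_nonpos.2 (by linarith [hβ1]))
        have e1 : |φ z| * ‖z‖^(-β) * ‖z‖ ≤ Λ * ‖z‖^(-β) * ‖z‖ :=
          mul_le_mul_of_nonneg_right
            (mul_le_mul_of_nonneg_right (hφb z) (Real.rpow_nonneg (norm_nonneg z) _))
            (norm_nonneg z)
        have e2 : Λ * ‖z‖^(-β) * ‖z‖ ≤ Λ * r^(-β) * ‖z‖ :=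
          mul_le_mul_of_nonneg_right (mul_le_mul_of_nonneg_left h1 hΛ0.le) (norm_nonneg z)
        have e3 : Λ * r^(-β) * ‖z‖ ≤ Λ * r^(-β) * R :=
          mul_le_mul_of_nonneg_left hz2 (mul_nonneg hΛ0.le (Real.rpow_nonneg hr.le _))
        linarith
      have hint1 : IntegrableOn (fun z => (K x (x+z) * ‖z‖^(-β)) • z) S :=
        hgen _ (hKcont.comp (continuous_const.prodMk
          (continuous_const.add continuous_id))).measurable (fun z => hKabs x (x+z))
      have hint2 : IntegrableOn (fun z => ((-(K x (x - z))) * ‖z‖^(-β)) • z) S :=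
        hgen _ ((hKcont.comp (continuous_const.prodMk
          (continuous_const.sub continuous_id))).neg).measurable
          (fun z => by rw [abs_neg]; exact hKabs x (x-z))
      have hnegS : (Neg.neg : EuclideanSpace ℝ (Fin d) → EuclideanSpace ℝ (Fin d)) ⁻¹' S = S := by
        ext z
        simp [hS, mem_closedBall_zero_iff]
      have hneg : ∫ z in S, (K x (x+z) * ‖z‖^(-β)) • z
          = ∫ z in S, ((-(K x (x - z))) * ‖z‖^(-β)) • z := by
        have hmp := (Measure.measurePreserving_neg
          (volume : Measure (EuclideanSpace ℝ (Fin d)))).setIntegral_preimage_emb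
          (MeasurableEquiv.neg (EuclideanSpace ℝ (Fin d))).measurableEmbedding
          (fun z => (K x (x+z) * ‖z‖^(-β)) • z) S
        rw [hnegS] at hmp
        rw [← hmp]
        refine integral_congr_ae (ae_of_all _ fun z => ?_)
        show (K x (x + -z) * ‖-z‖^(-β)) • (-z) = ((-(K x (x - z))) * ‖z‖^(-β)) • z
        rw [show x + -z = x - z from (sub_eq_add_neg x z).symm, norm_neg, smul_neg, ← neg_smul]
        congr 1
        ring
      have hptsum : ∀ z : EuclideanSpace ℝ (Fin d),
          (2:ℝ) • Hk x z = (K x (x+z) * ‖z‖^(-β)) • z + ((-(K x (x - z))) * ‖z‖^(-β)) • z := by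
        intro z
        rw [hHk]
        simp only []
        rw [smul_smul, ← add_smul]
        congr 1
        ring
      have hIntH : IntegrableOn (Hk x) S := (hIntOn x R hR0).mono_set diff_subset
      have h2 : (2:ℝ) • (∫ z in S, Hk x z) = (2:ℝ) • ∫ z in S, (K x (x+z) * ‖z‖^(-β)) • z := by
        calc (2:ℝ) • ∫ z in S, Hk x z = ∫ z in S, (2:ℝ) • Hk x z := (integral_smul _ _).symm
          _ = ∫ z in S, ((K x (x+z) * ‖z‖^(-β)) • z + ((-(K x (x - z))) * ‖z‖^(-β)) • z) := by
              exact integral_congr_ae (ae_of_all _ fun z => hptsum z)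
          _ = (∫ z in S, (K x (x+z) * ‖z‖^(-β)) • z)
              + ∫ z in S, ((-(K x (x - z))) * ‖z‖^(-β)) • z := integral_add hint1 hint2
          _ = (2:ℝ) • ∫ z in S, (K x (x+z) * ‖z‖^(-β)) • z := by
              rw [← hneg, two_smul]
      have := smul_right_injective (EuclideanSpace ℝ (Fin d)) (two_ne_zero) h2
      exact this.symm
    have hlim : Tendsto (fun r : ℝ =>
        ∫ z in closedBall (0:EuclideanSpace ℝ (Fin d)) R \ closedBall 0 r, Hk x z)
        (𝓝[>] 0) (𝓝 (∫ z in closedBall (0:EuclideanSpace ℝ (Fin d)) R, Hk x z)) := by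
      rw [tendsto_iff_seq_tendsto]
      intro u hu
      have hu0 : Tendsto u atTop (𝓝 0) := hu.mono_right nhdsWithin_le_nhds
      have hfun : ((fun r : ℝ =>
            ∫ z in closedBall (0:EuclideanSpace ℝ (Fin d)) R \ closedBall 0 r, Hk x z) ∘ u)
          = fun n => ∫ z, Set.indicator
              (closedBall (0:EuclideanSpace ℝ (Fin d)) R \ closedBall 0 (u n)) (Hk x) z :=
        funext fun n => (integral_indicator (hSmeas (u n))).symm
      rw [hfun, show (∫ z in closedBall (0:EuclideanSpace ℝ (Fin d)) R, Hk x z)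
          = ∫ z, Set.indicator (closedBall (0:EuclideanSpace ℝ (Fin d)) R) (Hk x) z from
          (integral_indicator measurableSet_closedBall).symm]
      refine tendsto_integral_of_dominated_convergence
        (Set.indicator (closedBall (0:EuclideanSpace ℝ (Fin d)) R)
          (fun z => Mder * ‖z‖ ^ (2-β)))
        (fun n => ((hmeasz x).indicator (hSmeas _)).aestronglyMeasurable)
        ((integrable_indicator_iff measurableSet_closedBall).2
          ((auxIntegrableOn hd hβ2 hR0).const_mul Mder))
        (fun n => ae_of_all _ fun z => by
          by_cases hz : z ∈ closedBall (0:EuclideanSpace ℝ (Fin d)) R \ closedBall 0 (u n)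
          · rw [Set.indicator_of_mem hz, Set.indicator_of_mem hz.1]
            exact hb1 x z
          · rw [Set.indicator_of_notMem hz, norm_zero]
            exact Set.indicator_nonneg
              (fun z _ => mul_nonneg hM0 (Real.rpow_nonneg (norm_nonneg _) _)) z)
        ?_
      filter_upwards [measure_eq_zero_iff_ae_notMem.1 hvol0] with z hz0
      by_cases hzR : z ∈ closedBall (0:EuclideanSpace ℝ (Fin d)) R
      · rw [Set.indicator_of_mem hzR]
        have hzpos : 0 < ‖z‖ := norm_pos_iff.2 (by simpa using hz0)
        have hev : ∀ᶠ n in atTop, u n < ‖z‖ := hu0.eventually (gt_mem_nhds hzpos)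
        refine Tendsto.congr' ?_ tendsto_const_nhds
        filter_upwards [hev] with n hn
        have hmem : z ∈ closedBall (0:EuclideanSpace ℝ (Fin d)) R \ closedBall 0 (u n) :=
          (Set.mem_diff z).2 ⟨hzR, by rw [mem_closedBall_zero_iff]; exact not_le.2 hn⟩
        rw [Set.indicator_of_mem hmem]
      · have hz1 : ∀ n, Set.indicator
            (closedBall (0:EuclideanSpace ℝ (Fin d)) R \ closedBall 0 (u n)) (Hk x) z = 0 :=
          fun n => Set.indicator_of_notMem (fun hc => hzR hc.1) _
        rw [Set.indicator_of_notMem hzR]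
        simp only [hz1]
        exact tendsto_const_nhds
    refine Tendsto.congr' ?_ hlim
    filter_upwards [self_mem_nhdsWithin] with r hr
    rw [hSdef r, hsym r hr]
  · -- continuity
    rw [continuous_iff_continuousAt]
    intro x₀
    apply continuousAt_of_dominated
      (bound := fun z => Mder * ‖z‖ ^ (2-β))
    · exact Eventually.of_forall fun x => (hmeasz x).aestronglyMeasurable
    · exact Eventually.of_forall fun x' => ae_of_all _ fun z => hb1 x' z
    · exact (auxIntegrableOn hd hβ2 hR0).const_mul Mder
    · refine ae_of_all _ fun z => ?_
      exact (((hcontx z).mul continuous_const).smul continuous_const).continuousAt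
  · -- periodicity
    intro x m
    show (∫ z in closedBall (0:EuclideanSpace ℝ (Fin d)) R, Hk (x + intVec m) z)
      = ∫ z in closedBall (0:EuclideanSpace ℝ (Fin d)) R, Hk x z
    refine integral_congr_ae (ae_of_all _ fun z => ?_)
    rw [hHk]
    simp only []
    have e1 : x + intVec m + z = (x + z) + intVec m := by abel
    have e2 : x + intVec m - z = (x - z) + intVec m := by abel
    rw [e1, e2, (hKper (x + intVec m) (x+z) m).2, (hKper x (x+z) m).1,
      (hKper (x + intVec m) (x-z) m).2, (hKper x (x-z) m).1]
  · -- mean zero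
    have hcubesub : unitCube d ⊆ closedBall (0:EuclideanSpace ℝ (Fin d)) (d:ℝ) := by
      intro x hx
      rw [mem_closedBall_zero_iff, EuclideanSpace.norm_eq]
      have hsum : (Finset.univ.sum fun i => ‖x i‖^2) ≤ (d:ℝ)^2 := by
        calc (Finset.univ.sum fun i => ‖x i‖^2) ≤ Finset.univ.sum (fun _ : Fin d => (1:ℝ)) := by
              refine Finset.sum_le_sum fun i _ => ?_
              have := hx i
              rw [Real.norm_eq_abs, sq_abs]
              nlinarith [this.1, this.2]
          _ = (d:ℝ) := by simp
          _ ≤ (d:ℝ)^2 := by nlinarith [hd1]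
      calc Real.sqrt (Finset.univ.sum fun i => ‖x i‖^2) ≤ Real.sqrt ((d:ℝ)^2) :=
            Real.sqrt_le_sqrt hsum
        _ = (d:ℝ) := Real.sqrt_sq (by positivity)
    have hcubefin : volume (unitCube d) ≠ ⊤ :=
      ((measure_mono hcubesub).trans_lt measure_closedBall_lt_top).ne
    have hmeasprod : Measurable (Function.uncurry Hk) := by
      have hcp : Continuous fun p : EuclideanSpace ℝ (Fin d) × EuclideanSpace ℝ (Fin d) =>
          K p.1 (p.1 + p.2) - K p.1 (p.1 - p.2) :=
        (hKcont.comp (continuous_fst.prodMk (continuous_fst.add continuous_snd))).sub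
          (hKcont.comp (continuous_fst.prodMk (continuous_fst.sub continuous_snd)))
      exact (hcp.measurable.mul (by fun_prop :
        Measurable fun p : EuclideanSpace ℝ (Fin d) × EuclideanSpace ℝ (Fin d) =>
          2⁻¹ * ‖p.2‖ ^ (-β))).smul measurable_snd
    have hprodint : Integrable (Function.uncurry Hk)
        ((volume.restrict (unitCube d)).prod
          (volume.restrict (closedBall (0:EuclideanSpace ℝ (Fin d)) R))) := by
      have hiff := integrable_prod_iff (μ := volume.restrict (unitCube d))
        (ν := volume.restrict (closedBall (0:EuclideanSpace ℝ (Fin d)) R))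
        (f := Function.uncurry Hk) hmeasprod.aestronglyMeasurable
      refine hiff.2 ⟨ae_of_all _ fun x => hIntOn x R hR0, ?_⟩
      refine Measure.integrableOn_of_bounded
        (M := ∫ z in closedBall (0:EuclideanSpace ℝ (Fin d)) R, Mder * ‖z‖ ^ (2-β))
        hcubefin hmeasprod.norm.aestronglyMeasurable.integral_prod_right' ?_
      refine ae_of_all _ fun x => ?_
      rw [Real.norm_eq_abs, abs_of_nonneg (integral_nonneg fun z => norm_nonneg _)]
      exact integral_mono (hIntOn x R hR0).norm
        ((auxIntegrableOn hd hβ2 hR0).const_mul Mder) (fun z => hb1 x z)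
    have hinner : ∀ z : EuclideanSpace ℝ (Fin d),
        (∫ x in unitCube d, Hk x z) = 0 := by
      intro z
      have hintK1 : IntegrableOn (fun x => K x (x+z)) (unitCube d) := by
        refine Measure.integrableOn_of_bounded (M := Λ) hcubefin
          (hKcont.comp (continuous_id.prodMk
            (continuous_id.add continuous_const))).measurable.aestronglyMeasurable ?_
        exact ae_of_all _ fun x => by rw [Real.norm_eq_abs]; exact hKabs x (x+z)
      have hintK2 : IntegrableOn (fun x => K x (x-z)) (unitCube d) := by
        refine Measure.integrableOn_of_bounded (M := Λ) hcubefin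
          (hKcont.comp (continuous_id.prodMk
            (continuous_id.sub continuous_const))).measurable.aestronglyMeasurable ?_
        exact ae_of_all _ fun x => by rw [Real.norm_eq_abs]; exact hKabs x (x-z)
      have hzero : (∫ x in unitCube d, (K x (x+z) - K x (x-z))) = 0 := by
        rw [integral_sub hintK1 hintK2, sub_eq_zero]
        have hfper : ∀ (y : EuclideanSpace ℝ (Fin d)) (m : Fin d → ℤ),
            (fun y => K y (y + z)) (y + intVec m) = (fun y => K y (y + z)) y := by
          intro y m
          simp only []
          have e1 : y + intVec m + z = (y + z) + intVec m := by abel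
          rw [e1, (hKper (y + intVec m) (y+z) m).2, (hKper y (y+z) m).1]
        have htr := auxTranslate hd (fun y => K y (y + z)) hfper (-z)
        have hsimp : ∀ x : EuclideanSpace ℝ (Fin d),
            (fun y => K y (y + z)) (x + -z) = K x (x - z) := by
          intro x
          simp only []
          have e2 : (x + -z) + z = x := by abel
          have e1 : x + -z = x - z := (sub_eq_add_neg x z).symm
          rw [e2, e1, hKsym]
        calc (∫ x in unitCube d, K x (x+z))
            = ∫ x in unitCube d, (fun y => K y (y + z)) (x + -z) := htr.symm
          _ = ∫ x in unitCube d, K x (x - z) :=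
              integral_congr_ae (ae_of_all _ fun x => hsimp x)
      calc (∫ x in unitCube d, Hk x z)
          = (∫ x in unitCube d, (K x (x+z) - K x (x-z)) * (2⁻¹*‖z‖^(-β))) • z :=
            integral_smul_const _ z
        _ = ((∫ x in unitCube d, (K x (x+z) - K x (x-z))) * (2⁻¹*‖z‖^(-β))) • z := by
            rw [integral_mul_const]
        _ = 0 := by rw [hzero, zero_mul, zero_smul]
    show (∫ x in unitCube d, ∫ z in closedBall (0:EuclideanSpace ℝ (Fin d)) R, Hk x z) = 0
    calc (∫ x in unitCube d, ∫ z in closedBall (0:EuclideanSpace ℝ (Fin d)) R, Hk x z)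
        = ∫ z in closedBall (0:EuclideanSpace ℝ (Fin d)) R, ∫ x in unitCube d, Hk x z :=
          integral_integral_swap hprodint
      _ = ∫ z in closedBall (0:EuclideanSpace ℝ (Fin d)) R, (0:EuclideanSpace ℝ (Fin d)) := by
          exact integral_congr_ae (ae_of_all _ fun z => hinner z)
      _ = 0 := integral_zero _ _
  · -- sup bound
    intro x
    have hnorm1 : ‖∫ z in closedBall (0:EuclideanSpace ℝ (Fin d)) R, Hk x z‖
        ≤ ∫ z in closedBall (0:EuclideanSpace ℝ (Fin d)) R, ‖Hk x z‖ :=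
      norm_integral_le_integral_norm _
    have hsub1R : closedBall (0:EuclideanSpace ℝ (Fin d)) 1 ⊆ closedBall 0 R :=
      closedBall_subset_closedBall hR1.le
    have hsplit := integral_diff (f := fun z => ‖Hk x z‖) measurableSet_closedBall
      ((hIntOn x R hR0).norm) hsub1R
    have hS1 : (∫ z in closedBall (0:EuclideanSpace ℝ (Fin d)) 1, ‖Hk x z‖) ≤ A := by
      rw [hA, ← integral_const_mul]
      exact setIntegral_mono_on ((hIntOn x 1 one_pos).norm)
        ((auxIntegrableOn hd hβ2 one_pos).const_mul Mder) measurableSet_closedBall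
        (fun z _ => hb1 x z)
    have hIntAnn : IntegrableOn (fun z : EuclideanSpace ℝ (Fin d) => Λ * ‖z‖ ^ (1-β))
        (closedBall (0:EuclideanSpace ℝ (Fin d)) R \ closedBall 0 1) := by
      refine Measure.integrableOn_of_bounded (M := Λ)
        (((measure_mono diff_subset).trans_lt measure_closedBall_lt_top).ne)
        (by fun_prop : Measurable fun z : EuclideanSpace ℝ (Fin d) =>
          Λ * ‖z‖ ^ (1-β)).aestronglyMeasurable ?_
      filter_upwards [ae_restrict_mem (hSmeas 1)] with z hz
      have hz1 : 1 < ‖z‖ := by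
        have := hz.2; rw [mem_closedBall_zero_iff] at this; exact not_le.1 this
      have hle1 : ‖z‖ ^ (1-β) ≤ 1 :=
        Real.rpow_le_one_of_one_le_of_nonpos hz1.le (by linarith)
      rw [Real.norm_eq_abs, abs_of_nonneg (mul_nonneg hΛ0.le
        (Real.rpow_nonneg (norm_nonneg z) _))]
      nlinarith [Real.rpow_nonneg (norm_nonneg z) (1-β), hΛ0]
    have hS2 : (∫ z in closedBall (0:EuclideanSpace ℝ (Fin d)) R \ closedBall 0 1, ‖Hk x z‖)
        ≤ Λ * ∫ z in {z : EuclideanSpace ℝ (Fin d) | 1 < ‖z‖ ∧ ‖z‖ ≤ R}, ‖z‖ ^ (1-β) := by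
      rw [hSdef 1, ← integral_const_mul]
      exact setIntegral_mono_on (IntegrableOn.mono_set ((hIntOn x R hR0).norm) diff_subset)
        hIntAnn (hSmeas 1) (fun z _ => hb2 x z)
    have hannulus := auxAnnulus hd (1-β) zero_le_one hR1.le
    have hsimpint : (∫ y in (1:ℝ)..R, y ^ (d-1:ℕ) * y ^ (1-β)) = ∫ y in (1:ℝ)..R, y ^ (-α) := by
      refine intervalIntegral.integral_congr fun y hy => ?_
      rw [Set.uIcc_of_le hR1.le] at hy
      have hy0 : (0:ℝ) < y := lt_of_lt_of_le one_pos hy.1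
      rw [← Real.rpow_natCast y (d-1), ← Real.rpow_add hy0]
      congr 1
      have hcast : ((d-1:ℕ):ℝ) = (d:ℝ) - 1 := by
        have : (1:ℕ) ≤ d := hd
        push_cast [Nat.cast_sub this]
        ring
      rw [hcast, hβ]
      ring
    rw [← hCd] at hannulus
    have hS2' : (∫ z in closedBall (0:EuclideanSpace ℝ (Fin d)) R \ closedBall 0 1, ‖Hk x z‖)
        ≤ Λ * (Cd * ∫ y in (1:ℝ)..R, y ^ (-α)) := by
      calc (∫ z in closedBall (0:EuclideanSpace ℝ (Fin d)) R \ closedBall 0 1, ‖Hk x z‖)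
          ≤ Λ * ∫ z in {z : EuclideanSpace ℝ (Fin d) | 1 < ‖z‖ ∧ ‖z‖ ≤ R}, ‖z‖ ^ (1-β) := hS2
        _ = Λ * (Cd * ∫ y in (1:ℝ)..R, y ^ (-α)) := by rw [hannulus, hsimpint]
    have htotal : (∫ z in closedBall (0:EuclideanSpace ℝ (Fin d)) R, ‖Hk x z‖)
        ≤ A + Λ * (Cd * ∫ y in (1:ℝ)..R, y ^ (-α)) := by linarith [hsplit, hS1, hS2']
    have hAc : A ≤ c := by
      have h1 : 0 ≤ Λ * Cd * (1 + (1-α)⁻¹) := mul_nonneg hLC (by linarith)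
      have h2 := le_abs_self A
      rw [hc]; linarith
    rcases eq_or_lt_of_le hα1 with hαeq | hαlt
    · -- α = 1
      have hif1 : ¬ (α < 1) := by rw [hαeq]; exact lt_irrefl 1
      rw [if_neg hif1, if_pos hαeq]
      have hval : (∫ y in (1:ℝ)..R, y ^ (-α)) = |Real.log ε| := by
        have heq1 : (∫ y in (1:ℝ)..R, y ^ (-α)) = ∫ y in (1:ℝ)..R, y⁻¹ := by
          refine intervalIntegral.integral_congr fun y hy => ?_
          rw [hαeq, Real.rpow_neg_one]
        rw [heq1, integral_inv (by
          rw [Set.uIcc_of_le hR1.le]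
          intro hcon
          have := hcon.1
          norm_num at this), div_one]
        rw [hR, one_div, Real.log_inv, abs_of_neg (Real.log_neg hε0 hε1)]
      have hL0 : 0 ≤ |Real.log ε| := abs_nonneg _
      have hprod : Λ * (Cd * |Real.log ε|) ≤ c * |Real.log ε| := by
        have h1 : Λ * Cd ≤ c := by
          have h2 := abs_nonneg A
          have h3 : 0 ≤ Λ * Cd * (1-α)⁻¹ := mul_nonneg hLC hαinv
          rw [hc]; nlinarith
        calc Λ * (Cd * |Real.log ε|) = (Λ * Cd) * |Real.log ε| := by ring
          _ ≤ c * |Real.log ε| := mul_le_mul_of_nonneg_right h1 hL0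
      rw [hval] at htotal
      have hfinal : ‖∫ z in closedBall (0:EuclideanSpace ℝ (Fin d)) R, Hk x z‖
          ≤ c * (1 + 0 + |Real.log ε|) := by nlinarith [hnorm1, htotal, hAc, hprod, hc0]
      exact hfinal
    · -- α < 1
      have hif2 : ¬ (α = 1) := ne_of_lt hαlt
      rw [if_pos hαlt, if_neg hif2]
      have h1α : (0:ℝ) < 1 - α := by linarith
      have hεR : R ^ (1-α) = ε ^ (α-1) := by
        rw [hR, one_div, Real.inv_rpow hε0.le, ← Real.rpow_neg hε0.le, neg_sub]
      have hP0 : 0 ≤ ε ^ (α-1) := Real.rpow_nonneg hε0.le _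
      have hT : (∫ y in (1:ℝ)..R, y ^ (-α)) ≤ ε ^ (α-1) * (1-α)⁻¹ := by
        rw [integral_rpow (Or.inl (by linarith : (-1:ℝ) < -α)), Real.one_rpow,
          show -α + 1 = 1 - α from by ring, hεR, div_eq_mul_inv]
        have hsub : ε ^ (α-1) - 1 ≤ ε ^ (α-1) := by linarith
        exact mul_le_mul_of_nonneg_right hsub hαinv
      have hprod : Λ * (Cd * (∫ y in (1:ℝ)..R, y ^ (-α))) ≤ c * ε ^ (α-1) := by
        have h1 : Λ * Cd * (1-α)⁻¹ ≤ c := by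
          have h2 := abs_nonneg A
          rw [hc]; nlinarith [hLC]
        have hT0 : 0 ≤ (∫ y in (1:ℝ)..R, y ^ (-α)) := by
          refine intervalIntegral.integral_nonneg hR1.le (fun y hy => ?_)
          exact Real.rpow_nonneg (by linarith [hy.1] : (0:ℝ) ≤ y) _
        calc Λ * (Cd * (∫ y in (1:ℝ)..R, y ^ (-α)))
            ≤ Λ * (Cd * (ε ^ (α-1) * (1-α)⁻¹)) := by
              refine mul_le_mul_of_nonneg_left (mul_le_mul_of_nonneg_left hT hCd0) hΛ0.le
          _ = (Λ * Cd * (1-α)⁻¹) * ε ^ (α-1) := by ring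
          _ ≤ c * ε ^ (α-1) := mul_le_mul_of_nonneg_right h1 hP0
      have hfinal : ‖∫ z in closedBall (0:EuclideanSpace ℝ (Fin d)) R, Hk x z‖
          ≤ c * (1 + ε ^ (α-1) + 0) := by nlinarith [hnorm1, htotal, hAc, hprod, hc0]
      exact hfinal
end
end
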